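/- arXiv:1705.08113 — 2 statements merged into one kernel-verified Lean document; each statement's English description precedes it below -/
import Mathlib

section
/- Let I=(i_1,…,i_r) be a composition of n. The multiset of descent compositions {D(T) : T a standard immaculate tableau of shape I} is equal to the multiset {mirror image of C(π̂^{-1}) : π a set partition of {1,…,n} with K(π)=I}, where π̂^{-1} denotes the inverse of the permutation π̂. -/
/-- `π` is a set partition of `{1,…,n}`. -/
def IsSetPartitionOn (n : ℕ) (π : Finset (Finset ℕ)) : Prop :=
  (∀ B ∈ π, B.Nonempty) ∧
  (∀ B ∈ π, ∀ C ∈ π, B ≠ C → Disjoint B C) ∧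
  (∀ x, x ∈ Finset.Icc 1 n ↔ ∃ B ∈ π, x ∈ B)

/-- Insert a block into a list of blocks sorted by decreasing maxima. -/
def insertByMax (B : Finset ℕ) : List (Finset ℕ) → List (Finset ℕ)
  | [] => [B]
  | C :: L => if C.max ≤ B.max then B :: C :: L else C :: insertByMax B L

/-- Sort a list of blocks by decreasing maxima. -/
def sortByMax : List (Finset ℕ) → List (Finset ℕ)
  | [] => []
  | B :: L => insertByMax B (sortByMax L)

/-- The blocks of `π`, listed so that their maxima decrease. -/
noncomputable def blocksByMax (π : Finset (Finset ℕ)) : List (Finset ℕ) :=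
  sortByMax π.toList

/-- `K(π)`: the composition formed by the block sizes of `π`, the blocks being ordered
so that their maxima decrease. -/
noncomputable def Kcomp (π : Finset (Finset ℕ)) : List ℕ :=
  (blocksByMax π).map Finset.card

/-- `π̂`: the word obtained by concatenating the blocks of `π` (ordered by decreasing
maxima), each block being listed increasingly. -/
noncomputable def hatWord (π : Finset (Finset ℕ)) : List ℕ :=
  ((blocksByMax π).map (fun B => B.sort (· ≤ ·))).flatten

/-- The descent set of a word (with 1-based positions): `{i : 1 ≤ i ≤ n−1, wᵢ > wᵢ₊₁}`. -/
def desSet (w : List ℕ) : Finset ℕ :=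
  (Finset.range w.length).filter (fun i => 0 < i ∧ w.getD i 0 < w.getD (i - 1) 0)

/-- The inverse of a permutation of `{1,…,n}` written as a word. -/
def invWord (w : List ℕ) : List ℕ :=
  (List.range w.length).map (fun j => w.idxOf (j + 1) + 1)

/-- The composition of `n` whose proper partial sums are the elements of `S`. -/
def compOfSet (n : ℕ) (S : Finset ℕ) : List ℕ :=
  let l := S.sort (· ≤ ·) ++ [n]
  List.zipWith (fun a b => a - b) l (0 :: l)

/-- `T` is a standard immaculate tableau of shape `I` (rows listed from top to bottom):
rows have lengths `I`, the entries are `1,…,n` each once, rows strictly increase, and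
the first column strictly increases. -/
def IsSIT (I : List ℕ) (T : List (List ℕ)) : Prop :=
  T.map List.length = I ∧
  T.flatten.Perm ((List.range I.sum).map (· + 1)) ∧
  (∀ row ∈ T, row.Chain' (· < ·)) ∧
  (T.map (fun row => row.headD 0)).Chain' (· < ·)

/-- The descent set of a standard immaculate tableau:
`{i : i+1 lies in a strictly lower row of T than i}`. -/
def tabDesSet (n : ℕ) (T : List (List ℕ)) : Finset ℕ :=
  (Finset.range n).filter (fun i => 0 < i ∧
    T.findIdx (fun row => decide (i ∈ row)) < T.findIdx (fun row => decide (i + 1 ∈ row)))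


def rmax : Finset ℕ → Finset ℕ → Prop := fun X Y => Y.max ≤ X.max

instance : DecidableRel rmax := fun X Y => inferInstanceAs (Decidable (Y.max ≤ X.max))
instance : IsTotal (Finset ℕ) rmax := ⟨fun a b => (le_total b.max a.max).imp id id⟩
instance : IsTrans (Finset ℕ) rmax := ⟨fun _ _ _ h1 h2 => le_trans h2 h1⟩

lemma insertByMax_eq (B : Finset ℕ) (L : List (Finset ℕ)) :
    insertByMax B L = L.orderedInsert rmax B := by
  induction L with
  | nil => rfl
  | cons C L ih => simp only [insertByMax, List.orderedInsert, ih]; rfl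

lemma sortByMax_eq (L : List (Finset ℕ)) : sortByMax L = L.insertionSort rmax := by
  induction L with
  | nil => rfl
  | cons C L ih => simp only [sortByMax, List.insertionSort, ih, insertByMax_eq, List.foldr_cons]

lemma sortByMax_perm (L : List (Finset ℕ)) : (sortByMax L).Perm L := by
  rw [sortByMax_eq]; exact L.perm_insertionSort rmax

lemma sortByMax_sorted (L : List (Finset ℕ)) : (sortByMax L).Pairwise rmax := by
  rw [sortByMax_eq]; exact L.pairwise_insertionSort rmax

def smax : Finset ℕ → Finset ℕ → Prop := fun X Y => Y.max < X.max

instance : IsAntisymm (Finset ℕ) smax := ⟨fun _ _ h1 h2 => absurd h1 (not_lt.2 h2.le)⟩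
instance : IsTrans (Finset ℕ) smax := ⟨fun _ _ _ h1 h2 => lt_trans h2 h1⟩

lemma eq_of_perm_of_smax {L1 L2 : List (Finset ℕ)} (h : L1.Perm L2)
    (h1 : L1.Pairwise smax) (h2 : L2.Pairwise smax) : L1 = L2 :=
  List.Perm.eq_of_pairwise (fun _ _ _ _ hab hba => absurd hab (not_lt.2 hba.le)) h1 h2 h

def cmpl (n x : ℕ) : ℕ := n + 1 - x

lemma cmpl_mem {n x : ℕ} (hx : x ∈ Finset.Icc 1 n) : cmpl n x ∈ Finset.Icc 1 n := by
  simp only [Finset.mem_Icc, cmpl] at *; omega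

lemma cmpl_cmpl {n x : ℕ} (hx : x ∈ Finset.Icc 1 n) : cmpl n (cmpl n x) = x := by
  simp only [Finset.mem_Icc, cmpl] at *; omega

lemma sort_headD_min' {s : Finset ℕ} (hs : s.Nonempty) :
    (s.sort (· ≤ ·)).headD 0 = s.min' hs := by
  rcases hl : s.sort (· ≤ ·) with _ | ⟨a, t⟩
  · exfalso
    have := Finset.length_sort (α := ℕ) (· ≤ ·) (s := s)
    rw [hl] at this
    simp only [List.length_nil] at this
    rw [eq_comm, Finset.card_eq_zero] at this
    exact hs.ne_empty this
  · have ha : a ∈ s := by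
      rw [← Finset.mem_sort (· ≤ ·), hl]; exact List.mem_cons_self
    have hsort := s.pairwise_sort (· ≤ ·)
    rw [hl, List.pairwise_cons] at hsort
    show a = s.min' hs
    refine (le_antisymm (s.min'_le a ha) ?_).symm
    have hm : s.min' hs ∈ s := s.min'_mem hs
    rw [← Finset.mem_sort (· ≤ ·), hl] at hm
    rcases List.mem_cons.1 hm with h | h
    · exact le_of_eq h.symm
    · exact hsort.1 _ h

lemma min'_image_cmpl {n : ℕ} {B : Finset ℕ} (hB : B.Nonempty)
    (hsub : ∀ x ∈ B, x ∈ Finset.Icc 1 n) :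
    (B.image (cmpl n)).min' (hB.image _) = cmpl n (B.max' hB) := by
  apply le_antisymm
  · exact Finset.min'_le _ _ (Finset.mem_image_of_mem _ (B.max'_mem hB))
  · obtain ⟨x, hx, hxe⟩ := Finset.mem_image.1 ((B.image (cmpl n)).min'_mem (hB.image _))
    rw [← hxe]
    have := B.le_max' x hx
    simp only [cmpl]
    omega

def rowOf (n : ℕ) (B : Finset ℕ) : List ℕ := (B.image (cmpl n)).sort (· ≤ ·)
def blockOf (n : ℕ) (row : List ℕ) : Finset ℕ := (row.map (cmpl n)).toFinset

section GoodList
variable {n : ℕ} {L : List (Finset ℕ)}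
  (hne : ∀ B ∈ L, B.Nonempty)
  (hsub : ∀ B ∈ L, ∀ x ∈ B, x ∈ Finset.Icc 1 n)

include hsub in
lemma rowOf_length {B : Finset ℕ} (hB : B ∈ L) : (rowOf n B).length = B.card := by
  rw [rowOf, Finset.length_sort, Finset.card_image_of_injOn]
  intro x hx y hy hxy
  have := hsub B hB x hx; have := hsub B hB y hy
  simp only [Finset.mem_Icc, cmpl] at *
  omega

include hsub in
lemma mem_rowOf {B : Finset ℕ} (hB : B ∈ L) {y : ℕ} :
    y ∈ rowOf n B ↔ (y ∈ Finset.Icc 1 n ∧ cmpl n y ∈ B) := by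
  rw [rowOf, Finset.mem_sort, Finset.mem_image]
  constructor
  · rintro ⟨x, hx, rfl⟩
    exact ⟨cmpl_mem (hsub B hB x hx), by rw [cmpl_cmpl (hsub B hB x hx)]; exact hx⟩
  · rintro ⟨hy, hx⟩
    exact ⟨cmpl n y, hx, cmpl_cmpl hy⟩

lemma rowOf_chain' (B : Finset ℕ) : (rowOf n B).Chain' (· < ·) :=
  (Finset.sortedLT_sort _).isChain

lemma rowOf_nodup (B : Finset ℕ) : (rowOf n B).Nodup := Finset.sort_nodup _ _

include hne hsub in
lemma rowOf_headD {B : Finset ℕ} (hB : B ∈ L) :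
    (rowOf n B).headD 0 = cmpl n (B.max' (hne B hB)) := by
  rw [rowOf, sort_headD_min' ((hne B hB).image _), min'_image_cmpl (hne B hB) (hsub B hB)]

include hne hsub in
lemma heads_pairwise (hsmax : L.Pairwise smax) :
    L.Pairwise (fun B C => (rowOf n B).headD 0 < (rowOf n C).headD 0) := by
  refine hsmax.imp_of_mem ?_
  intro B C hB hC hBC
  rw [rowOf_headD hne hsub hB, rowOf_headD hne hsub hC]
  have hBm := hsub B hB _ (B.max'_mem (hne B hB))
  have hCm := hsub C hC _ (C.max'_mem (hne C hC))
  have : C.max' (hne C hC) < B.max' (hne B hB) := by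
    have := hBC
    rw [smax, ← Finset.coe_max' (hne B hB), ← Finset.coe_max' (hne C hC)] at this
    exact_mod_cast this
  simp only [Finset.mem_Icc, cmpl] at *
  omega

include hne hsub in
lemma Tof_isSIT (hsmax : L.Pairwise smax) (hdis : L.Pairwise Disjoint)
    (hcov : ∀ x ∈ Finset.Icc 1 n, ∃ B ∈ L, x ∈ B)
    (hn : (L.map Finset.card).sum = n) :
    IsSIT (L.map Finset.card) (L.map (rowOf n)) := by
  refine ⟨?_, ?_, ?_, ?_⟩
  · rw [List.map_map]
    exact List.map_congr_left (fun B hB => rowOf_length hsub hB)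
  · rw [hn]
    apply List.perm_of_nodup_nodup_toFinset_eq
    · rw [List.nodup_flatten]
      constructor
      · intro l hl
        obtain ⟨B, _, rfl⟩ := List.mem_map.1 hl
        exact rowOf_nodup B
      · rw [List.pairwise_map]
        refine ((List.Pairwise.and_mem.1 hdis).imp ?_)
        rintro B C ⟨hB, hC, hBC⟩ y hyB hyC
        have h1 := (mem_rowOf hsub hB).1 hyB
        have h2 := (mem_rowOf hsub hC).1 hyC
        exact Finset.disjoint_left.1 hBC h1.2 h2.2
    · exact List.nodup_range.map (fun a b => by omega)
    · ext y
      simp only [List.mem_toFinset, List.mem_flatten, List.mem_map, List.mem_range]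
      constructor
      · rintro ⟨l, ⟨B, hB, rfl⟩, hy⟩
        have := (mem_rowOf hsub hB).1 hy
        obtain ⟨h1, -⟩ := this
        simp only [Finset.mem_Icc] at h1
        exact ⟨y - 1, by omega, by omega⟩
      · rintro ⟨j, hj, rfl⟩
        have hy : j + 1 ∈ Finset.Icc 1 n := by simp [Finset.mem_Icc]; omega
        obtain ⟨B, hB, hxB⟩ := hcov (cmpl n (j + 1)) (cmpl_mem hy)
        refine ⟨rowOf n B, ⟨B, hB, rfl⟩, ?_⟩
        exact (mem_rowOf hsub hB).2 ⟨hy, hxB⟩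
  · intro row hrow
    obtain ⟨B, _, rfl⟩ := List.mem_map.1 hrow
    exact rowOf_chain' B
  · rw [List.map_map]
    have := (heads_pairwise hne hsub hsmax).isChain
    show List.IsChain _ _
    rw [List.isChain_map] at *
    exact this

end GoodList


section Blocks
variable {n : ℕ} {π : Finset (Finset ℕ)}

lemma blocksByMax_perm (π : Finset (Finset ℕ)) : (blocksByMax π).Perm π.toList :=
  sortByMax_perm _

lemma mem_blocksByMax {B : Finset ℕ} : B ∈ blocksByMax π ↔ B ∈ π := by
  rw [(blocksByMax_perm π).mem_iff, Finset.mem_toList]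

lemma blocksByMax_nodup (π : Finset (Finset ℕ)) : (blocksByMax π).Nodup :=
  (blocksByMax_perm π).nodup_iff.2 π.nodup_toList

lemma max_ne_of_ne (hπ : IsSetPartitionOn n π) {B C : Finset ℕ}
    (hB : B ∈ π) (hC : C ∈ π) (hBC : B ≠ C) : C.max < B.max ∨ B.max < C.max := by
  rcases lt_or_ge C.max B.max with h | h
  · exact Or.inl h
  rcases lt_or_ge B.max C.max with h' | h'
  · exact Or.inr h'
  have heq : B.max = C.max := le_antisymm h h'
  exfalso
  obtain ⟨a, ha⟩ := Finset.max_of_nonempty (hπ.1 B hB)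
  have haB : a ∈ B := Finset.mem_of_max ha
  have haC : a ∈ C := Finset.mem_of_max (by rw [← heq]; exact ha)
  exact Finset.disjoint_left.1 (hπ.2.1 B hB C hC hBC) haB haC

lemma blocksByMax_sorted_smax (hπ : IsSetPartitionOn n π) :
    (blocksByMax π).Pairwise smax := by
  have h1 : (blocksByMax π).Pairwise rmax := sortByMax_sorted _
  have h2 : (blocksByMax π).Pairwise (· ≠ ·) := blocksByMax_nodup π
  refine ((h1.and h2).imp_of_mem ?_)
  intro B C hB hC ⟨hr, hne⟩
  rcases max_ne_of_ne hπ (mem_blocksByMax.1 hB) (mem_blocksByMax.1 hC) hne with h | h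
  · exact h
  · exact absurd hr (not_le.2 h)

lemma blocksByMax_pairwise_disjoint (hπ : IsSetPartitionOn n π) :
    (blocksByMax π).Pairwise Disjoint := by
  have h2 : (blocksByMax π).Pairwise (· ≠ ·) := blocksByMax_nodup π
  refine h2.imp_of_mem ?_
  intro B C hB hC hne
  exact hπ.2.1 B (mem_blocksByMax.1 hB) C (mem_blocksByMax.1 hC) hne

/-- Uniqueness: any strictly-sorted list of the blocks equals `blocksByMax π`. -/
lemma blocksByMax_eq_of_perm {M : List (Finset ℕ)} (hπ : IsSetPartitionOn n π)
    (hperm : M.Perm π.toList) (hs : M.Pairwise smax) : blocksByMax π = M :=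
  eq_of_perm_of_smax ((blocksByMax_perm π).trans hperm.symm)
    (blocksByMax_sorted_smax hπ) hs

end Blocks


lemma eq_of_perm_of_lt {l1 l2 : List ℕ} (h : l1.Perm l2)
    (h1 : l1.Pairwise (· < ·)) (h2 : l2.Pairwise (· < ·)) : l1 = l2 :=
  List.Perm.eq_of_pairwise (fun _ _ _ _ hab hba => absurd hab (not_lt.2 hba.le)) h1 h2 h

lemma sort_toFinset_of_sorted {l : List ℕ} (hs : l.Chain' (· < ·)) :
    l.toFinset.sort (· ≤ ·) = l := by
  haveI : IsAntisymm ℕ (· < ·) := ⟨fun a b h1 h2 => absurd h1 (not_lt.2 h2.le)⟩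
  have hp : l.Pairwise (· < ·) := List.isChain_iff_pairwise.1 hs
  have hnd : l.Nodup := hp.nodup
  refine eq_of_perm_of_lt ?_ ?_ hp
  · exact List.perm_of_nodup_nodup_toFinset_eq (Finset.sort_nodup _ _) hnd
      (Finset.sort_toFinset _ _)
  · exact (Finset.sortedLT_sort _).pairwise

section RowBlock
variable {n : ℕ}

lemma mem_blockOf {row : List ℕ} {x : ℕ} :
    x ∈ blockOf n row ↔ ∃ y ∈ row, cmpl n y = x := by
  simp [blockOf]

lemma blockOf_nonempty {row : List ℕ} (h : row ≠ []) : (blockOf n row).Nonempty := by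
  rcases row with _ | ⟨a, t⟩
  · exact absurd rfl h
  · exact ⟨cmpl n a, mem_blockOf.2 ⟨a, List.mem_cons_self, rfl⟩⟩

lemma blockOf_sub {row : List ℕ} (hsub : ∀ x ∈ row, x ∈ Finset.Icc 1 n) :
    ∀ x ∈ blockOf n row, x ∈ Finset.Icc 1 n := by
  intro x hx
  obtain ⟨y, hy, rfl⟩ := mem_blockOf.1 hx
  exact cmpl_mem (hsub y hy)

lemma blockOf_card {row : List ℕ} (hnd : row.Nodup)
    (hsub : ∀ x ∈ row, x ∈ Finset.Icc 1 n) :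
    (blockOf n row).card = row.length := by
  rw [blockOf, List.toFinset_card_of_nodup, List.length_map]
  refine List.Nodup.map_on ?_ hnd
  intro x hx y hy hxy
  have := hsub x hx; have := hsub y hy
  simp only [Finset.mem_Icc, cmpl] at *
  omega

lemma blockOf_rowOf {B : Finset ℕ} (hsub : ∀ x ∈ B, x ∈ Finset.Icc 1 n) :
    blockOf n (rowOf n B) = B := by
  ext x
  rw [mem_blockOf]
  constructor
  · rintro ⟨y, hy, rfl⟩
    rw [rowOf, Finset.mem_sort, Finset.mem_image] at hy
    obtain ⟨b, hb, rfl⟩ := hy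
    rwa [cmpl_cmpl (hsub b hb)]
  · intro hx
    refine ⟨cmpl n x, ?_, cmpl_cmpl (hsub x hx)⟩
    rw [rowOf, Finset.mem_sort, Finset.mem_image]
    exact ⟨x, hx, rfl⟩

lemma rowOf_blockOf {row : List ℕ} (hs : row.Chain' (· < ·))
    (hsub : ∀ x ∈ row, x ∈ Finset.Icc 1 n) :
    rowOf n (blockOf n row) = row := by
  have himg : (blockOf n row).image (cmpl n) = row.toFinset := by
    ext z
    rw [Finset.mem_image]
    constructor
    · rintro ⟨x, hx, rfl⟩
      obtain ⟨y, hy, rfl⟩ := mem_blockOf.1 hx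
      rw [cmpl_cmpl (hsub y hy), List.mem_toFinset]
      exact hy
    · intro hz
      rw [List.mem_toFinset] at hz
      exact ⟨cmpl n z, mem_blockOf.2 ⟨z, hz, rfl⟩, cmpl_cmpl (hsub z hz)⟩
  rw [rowOf, himg, sort_toFinset_of_sorted hs]

lemma blockOf_max' {row : List ℕ} (hrow : row ≠ []) (hs : row.Chain' (· < ·)) :
    (blockOf n row).max' (blockOf_nonempty hrow) = cmpl n (row.headD 0) := by
  rcases row with _ | ⟨a, t⟩
  · exact absurd rfl hrow
  · have hmem : cmpl n a ∈ blockOf n (a :: t) :=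
      mem_blockOf.2 ⟨a, List.mem_cons_self, rfl⟩
    apply le_antisymm
    · obtain ⟨x, hx, he⟩ := mem_blockOf.1 ((blockOf n (a :: t)).max'_mem (blockOf_nonempty hrow))
      rw [← he]
      have : a ≤ x := by
        rcases List.mem_cons.1 hx with rfl | hx'
        · exact le_refl _
        · exact le_of_lt ((List.pairwise_cons.1 (List.isChain_iff_pairwise.1 hs)).1 x hx')
      simp only [cmpl, List.headD_cons]
      omega
    · exact Finset.le_max' _ _ hmem

end RowBlock


noncomputable def Tof (n : ℕ) (π : Finset (Finset ℕ)) : List (List ℕ) :=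
  (blocksByMax π).map (rowOf n)

def Pof (n : ℕ) (T : List (List ℕ)) : Finset (Finset ℕ) :=
  (T.map (blockOf n)).toFinset

section SITside
variable {n : ℕ} {I : List ℕ} {T : List (List ℕ)}

theorem Pof_props (hI : ∀ i ∈ I, 0 < i) (hT : IsSIT I T) (hn : I.sum = n) :
    IsSetPartitionOn n (Pof n T) ∧ blocksByMax (Pof n T) = T.map (blockOf n) ∧
      Kcomp (Pof n T) = I ∧ Tof n (Pof n T) = T := by
  obtain ⟨hlen, hflat, hchain, hheads⟩ := hT
  rw [hn] at hflat
  have hmem : ∀ row ∈ T, ∀ x ∈ row, x ∈ Finset.Icc 1 n := by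
    intro row hr x hx
    have hx2 : x ∈ T.flatten := List.mem_flatten.2 ⟨row, hr, hx⟩
    have := hflat.mem_iff.1 hx2
    simp only [List.mem_map, List.mem_range] at this
    obtain ⟨j, hj, rfl⟩ := this
    simp only [Finset.mem_Icc]; omega
  have hndflat : T.flatten.Nodup := by
    refine hflat.nodup_iff.2 ?_
    exact List.nodup_range.map (fun a b => by omega)
  have hdisj : T.Pairwise List.Disjoint := (List.nodup_flatten.1 hndflat).2
  have hrowne : ∀ row ∈ T, row ≠ [] := by
    intro row hr h0
    have : row.length ∈ I := by rw [← hlen]; exact List.mem_map_of_mem hr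
    have := hI _ this
    rw [h0] at this; simp at this
  have hrownd : ∀ row ∈ T, row.Nodup := fun row hr =>
    (List.isChain_iff_pairwise.1 (hchain row hr)).nodup
  set M := T.map (blockOf n) with hM
  have hheadT : T.Pairwise (fun r s => r.headD 0 < s.headD 0) :=
    List.pairwise_map.1 (List.isChain_iff_pairwise.1 hheads)
  have hMsmax : M.Pairwise smax := by
    rw [hM, List.pairwise_map]
    refine (List.Pairwise.and_mem.1 hheadT).imp ?_
    rintro r s ⟨hr, hs, hrs⟩
    show (blockOf n s).max < (blockOf n r).max
    rw [← Finset.coe_max' (blockOf_nonempty (hrowne r hr)),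
      ← Finset.coe_max' (blockOf_nonempty (hrowne s hs)),
      blockOf_max' (hrowne r hr) (hchain r hr),
      blockOf_max' (hrowne s hs) (hchain s hs)]
    have h1 : r.headD 0 ∈ Finset.Icc 1 n := by
      rcases r with _ | ⟨a, t⟩
      · exact absurd rfl (hrowne _ hr)
      · exact hmem _ hr a (List.mem_cons_self)
    have h2 : s.headD 0 ∈ Finset.Icc 1 n := by
      rcases s with _ | ⟨a, t⟩
      · exact absurd rfl (hrowne _ hs)
      · exact hmem _ hs a (List.mem_cons_self)
    rw [WithBot.coe_lt_coe]
    simp only [Finset.mem_Icc, cmpl] at *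
    omega
  have hMnodup : M.Nodup := hMsmax.imp (fun {a b} h he => by
    subst he; exact lt_irrefl _ h)
  have hPofList : (Pof n T).toList.Perm M := List.toFinset_toList hMnodup
  have hMdis : M.Pairwise Disjoint := by
    rw [hM, List.pairwise_map]
    refine (List.Pairwise.and_mem.1 hdisj).imp ?_
    rintro r s ⟨hr, hs, hrs⟩
    rw [Finset.disjoint_left]
    intro x hxr hxs
    obtain ⟨y1, hy1, he1⟩ := mem_blockOf.1 hxr
    obtain ⟨y2, hy2, he2⟩ := mem_blockOf.1 hxs
    have hb1 := hmem r hr y1 hy1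
    have hb2 := hmem s hs y2 hy2
    have : y1 = y2 := by
      simp only [Finset.mem_Icc, cmpl] at *
      omega
    exact hrs hy1 (this ▸ hy2)
  have hP : IsSetPartitionOn n (Pof n T) := by
    refine ⟨?_, ?_, ?_⟩
    · intro B hB
      obtain ⟨row, hr, rfl⟩ := List.mem_map.1 (List.mem_toFinset.1 hB)
      exact blockOf_nonempty (hrowne row hr)
    · intro B hB C hC hBC
      exact hMdis.forall (List.mem_toFinset.1 hB)
        (List.mem_toFinset.1 hC) hBC
    · intro x
      constructor
      · intro hx
        have hcx : cmpl n x ∈ T.flatten := by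
          rw [hflat.mem_iff]
          have := cmpl_mem hx
          simp only [Finset.mem_Icc] at this
          simp only [List.mem_map, List.mem_range]
          exact ⟨cmpl n x - 1, by omega, by omega⟩
        obtain ⟨row, hr, hxr⟩ := List.mem_flatten.1 hcx
        refine ⟨blockOf n row, List.mem_toFinset.2 (List.mem_map_of_mem hr), ?_⟩
        exact mem_blockOf.2 ⟨cmpl n x, hxr, cmpl_cmpl hx⟩
      · rintro ⟨B, hB, hxB⟩
        obtain ⟨row, hr, rfl⟩ := List.mem_map.1 (List.mem_toFinset.1 hB)
        obtain ⟨y, hy, rfl⟩ := mem_blockOf.1 hxB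
        exact cmpl_mem (hmem row hr y hy)
  have hBM : blocksByMax (Pof n T) = M :=
    blocksByMax_eq_of_perm hP hPofList.symm hMsmax
  refine ⟨hP, hBM, ?_, ?_⟩
  · rw [Kcomp, hBM, hM, List.map_map, ← hlen]
    exact List.map_congr_left (fun row hr =>
      blockOf_card (hrownd row hr) (hmem row hr))
  · rw [Tof, hBM, hM, List.map_map]
    nth_rewrite 2 [← List.map_id T]
    exact List.map_congr_left (fun row hr =>
      rowOf_blockOf (hchain row hr) (hmem row hr))

end SITside

lemma Pof_Tof {n : ℕ} {π : Finset (Finset ℕ)} (hπ : IsSetPartitionOn n π) :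
    Pof n (Tof n π) = π := by
  rw [Pof, Tof, List.map_map]
  have h1 : ((blocksByMax π).map (fun B => blockOf n (rowOf n B))) = blocksByMax π := by
    nth_rewrite 2 [← List.map_id (blocksByMax π)]
    refine List.map_congr_left (fun B hB => ?_)
    refine blockOf_rowOf (fun x hx => ?_)
    exact (hπ.2.2 x).2 ⟨B, mem_blocksByMax.1 hB, hx⟩
  rw [show ((fun row => blockOf n row) ∘ rowOf n) = (fun B => blockOf n (rowOf n B)) from rfl, h1]
  ext B
  rw [List.mem_toFinset, mem_blocksByMax]


def diffAux : ℕ → List ℕ → List ℕ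
  | _, [] => []
  | p, x :: t => (x - p) :: diffAux x t

lemma zipWith_sub_eq_diffAux (p : ℕ) (l : List ℕ) :
    List.zipWith (fun a b => a - b) l (p :: l) = diffAux p l := by
  induction l generalizing p with
  | nil => rfl
  | cons x t ih => simpa [diffAux] using ih x

lemma compOfSet_eq (n : ℕ) (S : Finset ℕ) :
    compOfSet n S = diffAux 0 (S.sort (· ≤ ·) ++ [n]) := by
  rw [compOfSet]
  exact zipWith_sub_eq_diffAux 0 _

lemma getLastD_cons_append (c b : ℕ) (A : List ℕ) :
    ((c :: (A ++ [b])).getLast?.getD 0) = b := by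
  induction A generalizing c with
  | nil => rfl
  | cons x t ih => rw [List.cons_append, List.getLast?_cons_cons]; exact ih x

lemma diffAux_append (q b : ℕ) (L : List ℕ) :
    diffAux q (L ++ [b]) = diffAux q L ++ [b - ((q :: L).getLast?.getD 0)] := by
  induction L generalizing q with
  | nil => rfl
  | cons x t ih =>
    have hgl : ((q :: x :: t).getLast?.getD 0) = ((x :: t).getLast?.getD 0) := by
      rw [List.getLast?_cons_cons]
    simp only [List.cons_append, diffAux, List.append_eq, ih x, hgl, List.cons.injEq, true_and]

lemma diffAux_reverse (n : ℕ) : ∀ (p : ℕ) (l : List ℕ),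
    (p :: l).Chain' (· < ·) → (∀ x ∈ l, x ≤ n) → p ≤ n →
    (diffAux p (l ++ [n])).reverse = diffAux 0 ((l.map (n - ·)).reverse ++ [n - p])
  | p, [], _, _, _ => by simp [diffAux]
  | p, x :: t, hchain, hub, hp => by
    have hxt : (x :: t).Chain' (· < ·) := hchain.tail
    have hpx : p < x := List.isChain_cons_cons.1 hchain |>.1
    have hxn : x ≤ n := hub x (List.mem_cons_self)
    have ih := diffAux_reverse n x t hxt (fun y hy => hub y (List.mem_cons_of_mem x hy)) hxn
    simp only [List.cons_append, diffAux, List.append_eq, List.reverse_cons, ih, List.map_cons]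
    rw [diffAux_append 0 (n - p) ((List.map (fun x => n - x) t).reverse ++ [n - x])]
    congr 1
    have hl0 : ((0 :: ((List.map (fun x => n - x) t).reverse ++ [n - x])).getLast?.getD 0)
        = n - x := getLastD_cons_append _ _ _
    rw [hl0]
    congr 1
    omega

lemma compOfSet_image_reverse (n : ℕ) (S : Finset ℕ)
    (hS : ∀ x ∈ S, 0 < x ∧ x < n) :
    compOfSet n (S.image (fun x => n - x)) = (compOfSet n S).reverse := by
  haveI : IsAntisymm ℕ (· < ·) := ⟨fun a b h1 h2 => absurd h1 (not_lt.2 h2.le)⟩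
  set l := S.sort (· ≤ ·) with hl
  have hlS : ∀ x ∈ l, 0 < x ∧ x < n := fun x hx => hS x ((Finset.mem_sort _).1 hx)
  have hsorted : l.Pairwise (· < ·) := (S.sortedLT_sort).pairwise
  have hsort_img : (S.image (fun x => n - x)).sort (· ≤ ·) = (l.map (n - ·)).reverse := by
    refine eq_of_perm_of_lt ?_ ?_ ?_
    · refine List.perm_of_nodup_nodup_toFinset_eq (Finset.sort_nodup _ _) ?_ ?_
      · rw [List.nodup_reverse]
        refine List.Nodup.map_on ?_ (Finset.sort_nodup _ _)
        intro x hx y hy hxy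
        have := hlS x hx; have := hlS y hy
        omega
      · rw [List.toFinset_reverse]
        ext z
        simp only [List.mem_toFinset, List.mem_map, hl, Finset.mem_sort, Finset.mem_image]
    · exact (Finset.sortedLT_sort _).pairwise
    · apply List.pairwise_reverse.2
      apply List.pairwise_map.2
      refine (List.Pairwise.and_mem.1 hsorted).imp ?_
      rintro x y ⟨hx, hy, hxy⟩
      have := hlS x hx; have := hlS y hy
      show n - y < n - x
      omega
  rw [compOfSet_eq, compOfSet_eq, hsort_img, ← hl]
  have := diffAux_reverse n 0 l ?_ (fun x hx => (hlS x hx).2.le) (Nat.zero_le n)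
  · rw [this, Nat.sub_zero]
  · show List.IsChain _ _
    rw [List.isChain_cons]
    refine ⟨fun y hy => ?_, hsorted.isChain⟩
    have : y ∈ l := by
      rcases l with _ | ⟨a, t⟩
      · simp at hy
      · simp only [List.head?_cons, Option.mem_def, Option.some.injEq] at hy
        subst hy; exact List.mem_cons_self
    exact (hlS y this).1


section Positions

lemma indexOf_lt_of_sorted {l : List ℕ} (hs : l.Chain' (· < ·)) {x y : ℕ}
    (hx : x ∈ l) (hy : y ∈ l) (hxy : x < y) : l.idxOf x < l.idxOf y := by
  induction l with
  | nil => simp at hx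
  | cons a t ih =>
    have hp := List.isChain_iff_pairwise.1 hs
    rcases eq_or_ne x a with heq | hxa
    · subst heq
      have hya : x ≠ y := by omega
      rw [List.idxOf_cons_self, List.idxOf_cons_ne _ (by exact_mod_cast hya)]
      omega
    · have hxt : x ∈ t := by
        rcases List.mem_cons.1 hx with rfl | h
        · exact absurd rfl hxa
        · exact h
      have hya : a ≠ y := by
        intro h; subst h
        exact absurd ((List.pairwise_cons.1 hp).1 x hxt) (by omega)
      have hyt : y ∈ t := by
        rcases List.mem_cons.1 hy with rfl | h
        · exact absurd rfl hya.symm.elim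
        · exact h
      rw [List.idxOf_cons_ne _ (by exact_mod_cast hxa.symm),
        List.idxOf_cons_ne _ (by exact_mod_cast hya)]
      have := ih hs.tail hxt hyt
      omega

lemma indexOf_flatten_cross {M : List (List ℕ)} (hnd : M.flatten.Nodup)
    {j k : ℕ} (hj : j < k) (hk : k < M.length) {x y : ℕ}
    (hx : x ∈ M[j]'(lt_trans hj hk)) (hy : y ∈ M[k]) :
    M.flatten.idxOf x < M.flatten.idxOf y := by
  have hsplit : M = M.take (j+1) ++ M.drop (j+1) := (List.take_append_drop _ M).symm
  have hflat : M.flatten = (M.take (j+1)).flatten ++ (M.drop (j+1)).flatten := by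
    conv_lhs => rw [hsplit]
    rw [List.flatten_append]
  set P := (M.take (j+1)).flatten with hP
  have hxP : x ∈ P := by
    refine List.mem_flatten.2 ⟨M[j]'(lt_trans hj hk), ?_, hx⟩
    have hjl : j < (M.take (j+1)).length := by
      rw [List.length_take]; omega
    have : (M.take (j+1))[j]'hjl = M[j]'(lt_trans hj hk) := by simp
    rw [← this]
    exact List.getElem_mem _
  have hyD : y ∈ (M.drop (j+1)).flatten := by
    refine List.mem_flatten.2 ⟨M[k], ?_, hy⟩
    have hkl : k - (j+1) < (M.drop (j+1)).length := by
      rw [List.length_drop]; omega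
    have : (M.drop (j+1))[k - (j+1)]'hkl = M[k] := by
      rw [List.getElem_drop]
      congr 1
      omega
    rw [← this]
    exact List.getElem_mem _
  have hyP : y ∉ P := by
    intro hyP
    rw [hflat, List.nodup_append] at hnd
    exact hnd.2.2 y hyP y hyD rfl
  rw [hflat, List.idxOf_append_of_mem hxP, List.idxOf_append_of_notMem hyP]
  have := List.idxOf_lt_length_iff.2 hxP
  omega

lemma indexOf_flatten_same {M : List (List ℕ)} (hnd : M.flatten.Nodup)
    {j : ℕ} (hj : j < M.length) {x y : ℕ}
    (hx : x ∈ M[j]) (hy : y ∈ M[j]) (hs : (M[j]).Chain' (· < ·)) (hxy : x < y) :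
    M.flatten.idxOf x < M.flatten.idxOf y := by
  have hsplit : M = M.take j ++ M.drop j := (List.take_append_drop _ M).symm
  have hdrop : M.drop j = M[j] :: M.drop (j+1) := List.drop_eq_getElem_cons hj
  have hflat : M.flatten = (M.take j).flatten ++ (M[j] ++ (M.drop (j+1)).flatten) := by
    conv_lhs => rw [hsplit]
    rw [List.flatten_append, hdrop, List.flatten_cons]
  set P := (M.take j).flatten
  have hnd2 : ((M.take j).flatten ++ (M[j] ++ (M.drop (j+1)).flatten)).Nodup := by
    rw [← hflat]; exact hnd
  rw [List.nodup_append] at hnd2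
  have hxP : x ∉ P := fun h => hnd2.2.2 x h x (List.mem_append_left _ hx) rfl
  have hyP : y ∉ P := fun h => hnd2.2.2 y h y (List.mem_append_left _ hy) rfl
  rw [hflat, List.idxOf_append_of_notMem hxP, List.idxOf_append_of_notMem hyP,
    List.idxOf_append_of_mem hx, List.idxOf_append_of_mem hy]
  have := indexOf_lt_of_sorted hs hx hy hxy
  omega

end Positions


section Stat
variable {n : ℕ} {π : Finset (Finset ℕ)}

theorem stat_eq (hπ : IsSetPartitionOn n π)
    (hn : ((blocksByMax π).map Finset.card).sum = n) :
    compOfSet n (tabDesSet n (Tof n π)) =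
      (compOfSet n (desSet (invWord (hatWord π)))).reverse := by
  set L := blocksByMax π with hL
  have hsub : ∀ B ∈ L, ∀ x ∈ B, x ∈ Finset.Icc 1 n := fun B hB x hx =>
    (hπ.2.2 x).2 ⟨B, mem_blocksByMax.1 hB, hx⟩
  have hneL : ∀ B ∈ L, B.Nonempty := fun B hB => hπ.1 B (mem_blocksByMax.1 hB)
  have hdisL : L.Pairwise Disjoint := blocksByMax_pairwise_disjoint hπ
  set M : List (List ℕ) := L.map (fun B => B.sort (· ≤ ·)) with hM
  have hw : hatWord π = M.flatten := rfl
  have hwlen : (hatWord π).length = n := by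
    rw [hw, List.length_flatten, hM, List.map_map]
    rw [show ((fun l => List.length l) ∘ fun B => B.sort (· ≤ ·))
      = fun B : Finset ℕ => B.card from funext (fun B => Finset.length_sort _)]
    exact hn
  have hwnodup : M.flatten.Nodup := by
    rw [List.nodup_flatten]
    constructor
    · intro l hl
      obtain ⟨B, _, rfl⟩ := List.mem_map.1 hl
      exact Finset.sort_nodup _ _
    · rw [hM, List.pairwise_map]
      refine hdisL.imp ?_
      intro B C hBC y hyB hyC
      rw [Finset.mem_sort] at hyB hyC
      exact Finset.disjoint_left.1 hBC hyB hyC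
  -- block index
  set bIdx : ℕ → ℕ := fun x => L.findIdx (fun B => decide (x ∈ B)) with hbIdxdef
  have hbIdx : ∀ x ∈ Finset.Icc 1 n, ∃ hj : bIdx x < L.length,
      x ∈ L[bIdx x] ∧ ∀ j' (hj' : j' < L.length), x ∈ L[j'] → j' = bIdx x := by
    intro x hx
    obtain ⟨B, hB, hxB⟩ := (hπ.2.2 x).1 hx
    have hBL : B ∈ L := mem_blocksByMax.2 hB
    have hex : ∃ C ∈ L, (fun C => decide (x ∈ C)) C := ⟨B, hBL, by simpa using hxB⟩
    have hlt : bIdx x < L.length := List.findIdx_lt_length_of_exists hex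
    have hmem : x ∈ L[bIdx x] := by
      have := List.findIdx_getElem (p := fun C => decide (x ∈ C)) (xs := L) (w := hlt)
      simpa using this
    refine ⟨hlt, hmem, ?_⟩
    intro j' hj' hxj'
    by_contra hne
    have hpw := List.pairwise_iff_getElem.1 hdisL
    rcases lt_or_gt_of_ne hne with h | h
    · exact Finset.disjoint_left.1 (hpw j' (bIdx x) hj' hlt h) hxj' hmem
    · exact Finset.disjoint_left.1 (hpw (bIdx x) j' hlt hj' h) hmem hxj'
  have hMget : ∀ (j : ℕ) (hj : j < L.length), M[j]'(by rw [hM, List.length_map]; exact hj)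
      = (L[j]'hj).sort (· ≤ ·) := by
    intro j hj
    simp [hM]
  have hmemM : ∀ (x : ℕ) (j : ℕ) (hj : j < L.length), x ∈ L[j]'hj →
      x ∈ M[j]'(by rw [hM, List.length_map]; exact hj) := by
    intro x j hj hx
    rw [hMget j hj, Finset.mem_sort]
    exact hx
  have hMlen : M.length = L.length := by rw [hM, List.length_map]
  -- key1
  have key1 : ∀ i, 1 ≤ i → i < n →
      ((hatWord π).idxOf (i+1) < (hatWord π).idxOf i ↔ bIdx (i+1) < bIdx i) := by
    intro i h1 h2
    have hiI : i ∈ Finset.Icc 1 n := by simp [Finset.mem_Icc]; omega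
    have hi1I : i + 1 ∈ Finset.Icc 1 n := by simp [Finset.mem_Icc]; omega
    obtain ⟨hj, hjm, -⟩ := hbIdx i hiI
    obtain ⟨hk, hkm, -⟩ := hbIdx (i+1) hi1I
    rcases lt_trichotomy (bIdx i) (bIdx (i+1)) with h | h | h
    · refine iff_of_false ?_ (by omega)
      have := indexOf_flatten_cross hwnodup (by exact h) (by rw [hMlen]; exact hk)
        (hmemM i _ hj hjm) (hmemM (i+1) _ hk hkm)
      rw [hw]; omega
    · refine iff_of_false ?_ (by omega)
      have hsorted : (M[bIdx i]'(by rw [hMlen]; exact hj)).Chain' (· < ·) := by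
        rw [hMget _ hj]; exact (Finset.sortedLT_sort _).isChain
      have hkm2 : i + 1 ∈ M[bIdx i]'(by rw [hMlen]; exact hj) := by
        have := hmemM (i+1) _ hk hkm
        simp only [h]
        exact this
      have := indexOf_flatten_same hwnodup (by rw [hMlen]; exact hj)
        (hmemM i _ hj hjm) hkm2 hsorted (by omega)
      rw [hw]; omega
    · refine iff_of_true ?_ h
      have := indexOf_flatten_cross hwnodup (by exact h) (by rw [hMlen]; exact hj)
        (hmemM (i+1) _ hk hkm) (hmemM i _ hj hjm)
      rw [hw]; omega
  -- invWord getD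
  have hinvlen : (invWord (hatWord π)).length = n := by
    rw [invWord, List.length_map, List.length_range, hwlen]
  have hgetD : ∀ k, k < n → (invWord (hatWord π)).getD k 0 = (hatWord π).idxOf (k+1) + 1 := by
    intro k hk
    rw [List.getD_eq_getElem _ _ (by rw [hinvlen]; exact hk)]
    simp [invWord]
  -- key2
  have key2 : desSet (invWord (hatWord π)) =
      (Finset.range n).filter (fun i => 0 < i ∧ bIdx (i+1) < bIdx i) := by
    ext i
    rw [desSet, Finset.mem_filter, Finset.mem_filter, Finset.mem_range, Finset.mem_range,
      hinvlen]
    constructor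
    · rintro ⟨hin, hi0, hlt⟩
      rw [hgetD i hin, hgetD (i-1) (by omega)] at hlt
      rw [show i - 1 + 1 = i from by omega] at hlt
      exact ⟨hin, hi0, (key1 i (by omega) hin).1 (by omega)⟩
    · rintro ⟨hin, hi0, hlt⟩
      refine ⟨hin, hi0, ?_⟩
      rw [hgetD i hin, hgetD (i-1) (by omega), show i - 1 + 1 = i from by omega]
      have := (key1 i (by omega) hin).2 hlt
      omega
  -- key3 : findIdx on Tof
  have hTof : Tof n π = L.map (rowOf n) := rfl
  have hfind : ∀ x ∈ Finset.Icc 1 n,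
      (Tof n π).findIdx (fun row => decide (x ∈ row)) = bIdx (cmpl n x) := by
    intro x hx
    obtain ⟨hj, hjm, hju⟩ := hbIdx (cmpl n x) (cmpl_mem hx)
    rw [hTof]
    have hlen : bIdx (cmpl n x) < (L.map (rowOf n)).length := by
      rw [List.length_map]; exact hj
    rw [List.findIdx_eq hlen]
    constructor
    · rw [List.getElem_map]
      simp only [decide_eq_true_eq]
      refine (mem_rowOf hsub (List.getElem_mem hj)).2 ⟨hx, hjm⟩
    · intro j' hj'
      rw [List.getElem_map]
      simp only [decide_eq_false_iff_not]
      intro hmem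
      have := (mem_rowOf hsub (List.getElem_mem (lt_trans hj' hj))).1 hmem
      have := hju j' (lt_trans hj' hj) this.2
      omega
  have key3 : tabDesSet n (Tof n π) =
      ((Finset.range n).filter (fun i => 0 < i ∧ bIdx (i+1) < bIdx i)).image
        (fun i => n - i) := by
    ext x
    rw [tabDesSet, Finset.mem_filter, Finset.mem_range, Finset.mem_image]
    constructor
    · rintro ⟨hxn, hx0, hlt⟩
      have hxI : x ∈ Finset.Icc 1 n := by simp [Finset.mem_Icc]; omega
      have hx1I : x + 1 ∈ Finset.Icc 1 n := by simp [Finset.mem_Icc]; omega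
      rw [hfind x hxI, hfind (x+1) hx1I] at hlt
      refine ⟨n - x, Finset.mem_filter.2 ⟨Finset.mem_range.2 (by omega), by omega, ?_⟩, by omega⟩
      rw [show n - x + 1 = cmpl n x from by simp only [cmpl]; omega,
        show n - x = cmpl n (x+1) from by simp only [cmpl]; omega]
      exact hlt
    · rintro ⟨i, hi, rfl⟩
      obtain ⟨hin, hi0, hlt⟩ := Finset.mem_filter.1 hi
      rw [Finset.mem_range] at hin
      have hxn : n - i < n := by omega
      have hx0 : 0 < n - i := by omega
      have hxI : n - i ∈ Finset.Icc 1 n := by simp [Finset.mem_Icc]; omega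
      have hx1I : n - i + 1 ∈ Finset.Icc 1 n := by simp [Finset.mem_Icc]; omega
      refine ⟨hxn, hx0, ?_⟩
      rw [hfind _ hxI, hfind _ hx1I]
      rw [show cmpl n (n - i) = i + 1 from by simp only [cmpl]; omega,
        show cmpl n (n - i + 1) = i from by simp only [cmpl]; omega]
      exact hlt
  rw [key3, key2]
  apply compOfSet_image_reverse
  intro x hx
  obtain ⟨hxr, hx0, -⟩ := Finset.mem_filter.1 hx
  exact ⟨hx0, Finset.mem_range.1 hxr⟩

end Stat

/-- The multiset of descent compositions `D(T)` over standard immaculate tableaux of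
shape `I` equals the multiset of mirror images of `C(π̂⁻¹)` over set partitions `π`
of `{1,…,n}` with `K(π) = I` (stated as an equality of counts for each composition). -/
theorem tabDes_multiset_eq (I : List ℕ) (hI : ∀ i ∈ I, 0 < i) (J : List ℕ) :
    Nat.card {T : List (List ℕ) //
        IsSIT I T ∧ compOfSet I.sum (tabDesSet I.sum T) = J}
    = Nat.card {π : Finset (Finset ℕ) //
        IsSetPartitionOn I.sum π ∧ Kcomp π = I ∧
        (compOfSet I.sum (desSet (invWord (hatWord π)))).reverse = J} := by
  apply Nat.card_congr
  refine
    { toFun := fun x => ⟨Pof I.sum x.1, ?_, ?_, ?_⟩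
      invFun := fun y => ⟨Tof I.sum y.1, ?_, ?_⟩
      left_inv := ?_
      right_inv := ?_ }
  · exact (Pof_props hI x.2.1 rfl).1
  · exact (Pof_props hI x.2.1 rfl).2.2.1
  · obtain ⟨hP, hBM, hK, hTof⟩ := Pof_props hI x.2.1 rfl
    have hs := stat_eq hP (by
      rw [show (blocksByMax (Pof I.sum x.1)).map Finset.card = Kcomp (Pof I.sum x.1) from rfl,
        hK])
    rw [hTof] at hs
    rw [← hs]
    exact x.2.2
  · have hsub : ∀ B ∈ blocksByMax y.1, ∀ z ∈ B, z ∈ Finset.Icc 1 I.sum := fun B hB z hz =>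
      (y.2.1.2.2 z).2 ⟨B, mem_blocksByMax.1 hB, hz⟩
    have hne : ∀ B ∈ blocksByMax y.1, B.Nonempty := fun B hB =>
      y.2.1.1 B (mem_blocksByMax.1 hB)
    have hcov : ∀ z ∈ Finset.Icc 1 I.sum, ∃ B ∈ blocksByMax y.1, z ∈ B := by
      intro z hz
      obtain ⟨B, hB, hzB⟩ := (y.2.1.2.2 z).1 hz
      exact ⟨B, mem_blocksByMax.2 hB, hzB⟩
    have hn : ((blocksByMax y.1).map Finset.card).sum = I.sum := by
      rw [show (blocksByMax y.1).map Finset.card = Kcomp y.1 from rfl, y.2.2.1]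
    have := Tof_isSIT hne hsub (blocksByMax_sorted_smax y.2.1)
      (blocksByMax_pairwise_disjoint y.2.1) hcov hn
    rw [show (blocksByMax y.1).map Finset.card = Kcomp y.1 from rfl, y.2.2.1] at this
    exact this
  · have hn : ((blocksByMax y.1).map Finset.card).sum = I.sum := by
      rw [show (blocksByMax y.1).map Finset.card = Kcomp y.1 from rfl, y.2.2.1]
    have hs := stat_eq y.2.1 hn
    rw [y.2.2.2] at hs
    exact hs
  · intro x
    exact Subtype.ext (Pof_props hI x.2.1 rfl).2.2.2
  · intro y
    exact Subtype.ext (Pof_Tof y.2.1)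
end

section
/- For all nonempty words u and v over an alphabet, the following identity holds in the free ℤ-module spanned by all words: u ≺ v = Σ_{(v_1,v_2) : v = v_1 v_2} (−1)^{|v_2|} ((u·rev(v_2)) ⧢ v_1), where the sum is over all factorizations of v into two (possibly empty) factors, rev denotes word reversal, |·| denotes length, and · denotes concatenation. -/
/-- The shuffle product of two words, as a multiset of words. -/
def sh {α : Type*} : List α → List α → Multiset (List α)
  | [], v => {v}
  | u, [] => {u}
  | a :: u, b :: v => ((sh u (b :: v)).map (a :: ·)) + ((sh (a :: u) v).map (b :: ·))
termination_by u v => u.length + v.length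
decreasing_by all_goals (simp [List.length_cons]; try omega)

/-- A multiset of words, seen as an element of the free `ℤ`-module spanned by words. -/
noncomputable def ofM {α : Type*} (m : Multiset (List α)) : (List α) →₀ ℤ :=
  (m.map (fun w => Finsupp.single w (1 : ℤ))).sum

lemma sh_nil_right {α : Type*} (u : List α) : sh u [] = {u} := by
  cases u <;> simp [sh]

lemma sh_nil_left {α : Type*} (v : List α) : sh [] v = {v} := by
  cases v <;> simp [sh]

lemma sh_cons_cons {α : Type*} (a b : α) (u v : List α) :
    sh (a :: u) (b :: v) = ((sh u (b :: v)).map (a :: ·)) + ((sh (a :: u) v).map (b :: ·)) := by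
  rw [sh]

/-- The mirror recursion for the shuffle product, on last letters. -/
lemma sh_mirror {α : Type*} (a b : α) : ∀ (u v : List α),
    sh (u ++ [a]) (v ++ [b]) =
      ((sh u (v ++ [b])).map (· ++ [a])) + ((sh (u ++ [a]) v).map (· ++ [b]))
  | [], [] => by
      simp [sh_cons_cons, sh_nil_left, sh_nil_right, ← Multiset.singleton_add]
      abel
  | [], d :: v => by
      have ih := sh_mirror a b [] v
      simp only [List.nil_append, List.cons_append] at *
      rw [sh_cons_cons a d [] (v ++ [b]), ih, sh_cons_cons a d [] v]
      simp [Multiset.map_map, Function.comp, sh_nil_left, sh_nil_right,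
        ← Multiset.singleton_add]
      abel
  | c :: u, [] => by
      have ih := sh_mirror a b u []
      simp only [List.nil_append, List.cons_append] at *
      rw [sh_cons_cons c b (u ++ [a]) [], ih, sh_cons_cons c b u []]
      simp [Multiset.map_map, Function.comp, sh_nil_left, sh_nil_right,
        ← Multiset.singleton_add]
      abel
  | c :: u, d :: v => by
      have ih1 := sh_mirror a b u (d :: v)
      have ih2 := sh_mirror a b (c :: u) v
      simp only [List.cons_append] at *
      rw [sh_cons_cons c d (u ++ [a]) (v ++ [b]), ih1, ih2,
        sh_cons_cons c d u (v ++ [b]), sh_cons_cons c d (u ++ [a]) v]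
      simp [Multiset.map_map, Function.comp, ← Multiset.singleton_add]
      abel
termination_by u v => u.length + v.length

lemma ofM_add {α : Type*} (m n : Multiset (List α)) : ofM (m + n) = ofM m + ofM n := by
  simp [ofM]

lemma key {α : Type*} : ∀ (v u' : List α) (a : α),
    ofM ((sh u' v).map (fun w => w ++ [a])) =
      ∑ k ∈ Finset.range (v.length + 1),
        ((-1 : ℤ) ^ (v.length - k)) •
          ofM (sh ((u' ++ [a]) ++ (v.drop k).reverse) (v.take k)) := by
  intro v
  induction v using List.reverseRecOn with
  | nil => intro u' a; simp [sh_nil_right, sh_nil_left]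
  | append_singleton w b ih =>
      intro u' a
      have hlen : (w ++ [b]).length = w.length + 1 := by simp
      rw [hlen, Finset.sum_range_succ]
      have hlast : (w ++ [b]).drop (w.length + 1) = [] := by simp
      have hlast2 : (w ++ [b]).take (w.length + 1) = w ++ [b] := by simp
      rw [hlast, hlast2]
      have hsum : ∑ k ∈ Finset.range (w.length + 1),
            ((-1 : ℤ) ^ (w.length + 1 - k)) •
              ofM (sh ((u' ++ [a]) ++ ((w ++ [b]).drop k).reverse) ((w ++ [b]).take k)) =
          ∑ k ∈ Finset.range (w.length + 1),
            (-((-1 : ℤ) ^ (w.length - k))) •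
              ofM (sh (((u' ++ [a]) ++ [b]) ++ (w.drop k).reverse) (w.take k)) := by
        apply Finset.sum_congr rfl
        intro k hk
        have hk' : k ≤ w.length := by
          simp [Finset.mem_range] at hk; omega
        have h1 : (w ++ [b]).drop k = w.drop k ++ [b] := by
          rw [List.drop_append_of_le_length hk']
        have h2 : (w ++ [b]).take k = w.take k := by
          rw [List.take_append_of_le_length hk']
        have h3 : (w.drop k ++ [b]).reverse = b :: (w.drop k).reverse := by simp
        have h4 : (u' ++ [a]) ++ (b :: (w.drop k).reverse) =
            ((u' ++ [a]) ++ [b]) ++ (w.drop k).reverse := by simp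
        have h5 : (-1 : ℤ) ^ (w.length + 1 - k) = -((-1 : ℤ) ^ (w.length - k)) := by
          have : w.length + 1 - k = (w.length - k) + 1 := by omega
          rw [this, pow_succ]; ring
        rw [h1, h2, h3, h4, h5]
      rw [hsum]
      have : ∑ k ∈ Finset.range (w.length + 1),
            (-((-1 : ℤ) ^ (w.length - k))) •
              ofM (sh (((u' ++ [a]) ++ [b]) ++ (w.drop k).reverse) (w.take k)) =
          -∑ k ∈ Finset.range (w.length + 1),
            ((-1 : ℤ) ^ (w.length - k)) •
              ofM (sh (((u' ++ [a]) ++ [b]) ++ (w.drop k).reverse) (w.take k)) := by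
        rw [← Finset.sum_neg_distrib]
        apply Finset.sum_congr rfl
        intro k _
        rw [neg_smul]
      rw [this, ← ih (u' ++ [a]) b]
      simp only [List.reverse_nil, List.append_nil, Nat.sub_self, pow_zero, one_smul]
      rw [sh_mirror a b u' w, ofM_add]
      abel

/-- For nonempty words `u = u'·a` and `v`, the standard left half-shuffle
`u ≺ v = (u' ⧢ v)a` satisfies
`u ≺ v = Σ_{v₁v₂ = v} (−1)^{|v₂|} ((u·rev(v₂)) ⧢ v₁)`. -/
theorem standard_left_half_shuffle_identity {α : Type*} (u' : List α) (a : α)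
    (v : List α) (hv : v ≠ []) :
    ofM ((sh u' v).map (fun w => w ++ [a])) =
      ∑ k ∈ Finset.range (v.length + 1),
        ((-1 : ℤ) ^ (v.length - k)) •
          ofM (sh ((u' ++ [a]) ++ (v.drop k).reverse) (v.take k)) := by
  exact key v u' a
end
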